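/- Let π be the group with presentation ⟨a₁,…,a₆, b₁,…,b₆ | a_{i+2} = a_i a_{i+1}, b_{i+2} = b_i b_{i+1}, a_i⁻¹ b_{i+1} a_{i+2} = b_i⁻¹ a_{i+1} b_{i+2}, for i = 1,…,6 with indices modulo 6⟩. Then the abelianization of π is isomorphic to (ℤ/4ℤ)⁴. -/

import Mathlib

/-- The generator `aᵢ` of the free group on `a₁,…,a₆,b₁,…,b₆` (indices modulo 6). -/
def a (i : Fin 6) : FreeGroup (Fin 6 ⊕ Fin 6) := FreeGroup.of (Sum.inl i)

/-- The generator `bᵢ` of the free group on `a₁,…,a₆,b₁,…,b₆` (indices modulo 6). -/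
def b (i : Fin 6) : FreeGroup (Fin 6 ⊕ Fin 6) := FreeGroup.of (Sum.inr i)

/-- The relations `a_{i+2} = a_i a_{i+1}`, `b_{i+2} = b_i b_{i+1}`,
`a_i⁻¹ b_{i+1} a_{i+2} = b_i⁻¹ a_{i+1} b_{i+2}` for `i` modulo 6. -/
def rels : Set (FreeGroup (Fin 6 ⊕ Fin 6)) :=
  (Set.range fun i : Fin 6 => (a i * a (i + 1)) * (a (i + 2))⁻¹) ∪
  (Set.range fun i : Fin 6 => (b i * b (i + 1)) * (b (i + 2))⁻¹) ∪
  (Set.range fun i : Fin 6 =>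
    ((a i)⁻¹ * b (i + 1) * a (i + 2)) * ((b i)⁻¹ * a (i + 1) * b (i + 2))⁻¹)

/-- The fundamental group `π = π₁(F)` of the fiber. -/
def π : Type := PresentedGroup rels

noncomputable instance : Group π := by unfold π; infer_instance

/-- abelianized images of the generators -/
def v : Fin 6 ⊕ Fin 6 → (Fin 4 → ZMod 4) :=
  Sum.elim
    ![![1,0,0,0], ![0,1,0,0], ![1,1,0,0], ![1,2,0,0], ![2,3,0,0], ![3,1,0,0]]
    ![![0,0,1,0], ![0,0,0,1], ![0,0,1,1], ![0,0,1,2], ![0,0,2,3], ![0,0,3,1]]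

abbrev G4 : Type := Multiplicative (Fin 4 → ZMod 4)

def fgen : Fin 6 ⊕ Fin 6 → G4 := fun s => Multiplicative.ofAdd (v s)

lemma hrels : ∀ r ∈ rels, FreeGroup.lift fgen r = 1 := by
  rintro r ((⟨i, rfl⟩ | ⟨i, rfl⟩) | ⟨i, rfl⟩) <;>
    simp only [a, b, map_mul, map_inv, FreeGroup.lift_apply_of] <;>
    fin_cases i <;> decide

noncomputable def F0 : π →* G4 := PresentedGroup.toGroup hrels

section fib
variable {M : Type*} [CommGroup M] (C : Fin 6 → M) (hC : ∀ i : Fin 6, C (i + 2) = C i * C (i + 1))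
include hC

lemma fib2 : C 2 = C 0 * C 1 := hC 0
lemma fib3 : C 3 = C 0 * (C 1 * C 1) := by
  have h := hC 1
  rw [show C (1+2) = C 3 from rfl, show C (1+1) = C 2 from rfl, fib2 C hC] at h
  rw [h]; simp [mul_comm, mul_assoc, mul_left_comm]
lemma fib4 : C 4 = (C 0 * C 0) * (C 1 * C 1 * C 1) := by
  have h := hC 2
  rw [show C (2+2) = C 4 from rfl, show C (2+1) = C 3 from rfl, fib2 C hC, fib3 C hC] at h
  rw [h]; simp [mul_comm, mul_assoc, mul_left_comm]
lemma fib5 : C 5 = (C 0 * C 0 * C 0) * (C 1 * C 1 * C 1 * C 1 * C 1) := by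
  have h := hC 3
  rw [show C (3+2) = C 5 from rfl, show C (3+1) = C 4 from rfl, fib3 C hC, fib4 C hC] at h
  rw [h]; simp [mul_comm, mul_assoc, mul_left_comm]

lemma fibv : (C 0 * C 0 * C 0 * C 0) * (C 1 * C 1 * C 1 * C 1) = 1 := by
  have h1 : C 1 = C 5 * C 0 := hC 5
  rw [fib5 C hC] at h1
  have : C 1 * 1 = C 1 * ((C 0 * C 0 * C 0 * C 0) * (C 1 * C 1 * C 1 * C 1)) := by
    rw [mul_one]; nth_rewrite 1 [h1]
    simp [mul_comm, mul_assoc, mul_left_comm]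
  exact (mul_left_cancel this).symm

lemma fibu : ((C 0 * C 0 * C 0 * C 0) * (C 1 * C 1 * C 1 * C 1)) * (C 1 * C 1 * C 1 * C 1) = 1 := by
  have h0 : C 0 = C 4 * C 5 := hC 4
  rw [fib4 C hC, fib5 C hC] at h0
  have : C 0 * 1 = C 0 * (((C 0 * C 0 * C 0 * C 0) * (C 1 * C 1 * C 1 * C 1)) * (C 1 * C 1 * C 1 * C 1)) := by
    rw [mul_one]; nth_rewrite 1 [h0]
    simp [mul_comm, mul_assoc, mul_left_comm]
  exact (mul_left_cancel this).symm

lemma fibp1 : C 1 ^ (4:ℕ) = 1 := by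
  have h := fibu C hC
  rw [fibv C hC, one_mul] at h
  simpa [pow_succ] using h

lemma fibp0 : C 0 ^ (4:ℕ) = 1 := by
  have h := fibv C hC
  rw [show C 1 * C 1 * C 1 * C 1 = C 1 ^ (4:ℕ) by simp [pow_succ], fibp1 C hC, mul_one] at h
  simpa [pow_succ] using h

lemma fib5' : C 5 = (C 0 * C 0 * C 0) * C 1 := by
  rw [fib5 C hC]
  have h : C 1 * C 1 * C 1 * C 1 = 1 := by
    simpa [pow_succ] using fibp1 C hC
  calc (C 0 * C 0 * C 0) * (C 1 * C 1 * C 1 * C 1 * C 1)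
      = ((C 0 * C 0 * C 0) * C 1) * (C 1 * C 1 * C 1 * C 1) := by
        simp [mul_comm, mul_assoc, mul_left_comm]
    _ = (C 0 * C 0 * C 0) * C 1 := by rw [h, mul_one]
end fib

noncomputable section

/-- The canonical map to the abelianization. -/
def Φ : FreeGroup (Fin 6 ⊕ Fin 6) →* Abelianization π :=
  (Abelianization.of).comp (PresentedGroup.mk rels)

lemma Φ_rels : ∀ r ∈ rels, Φ r = 1 := by
  intro r hr
  have : (PresentedGroup.mk rels r : π) = 1 :=
    (QuotientGroup.eq_one_iff r).mpr (Subgroup.subset_normalClosure hr)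
  show Abelianization.of (PresentedGroup.mk rels r) = 1
  rw [this, map_one]

def X (s : Fin 6 ⊕ Fin 6) : Abelianization π := Φ (FreeGroup.of s)
def A (i : Fin 6) : Abelianization π := X (Sum.inl i)
def B (i : Fin 6) : Abelianization π := X (Sum.inr i)

lemma relA : ∀ i : Fin 6, A (i + 2) = A i * A (i + 1) := by
  intro i
  have h := Φ_rels _ (Or.inl (Or.inl ⟨i, rfl⟩))
  simp only [a, map_mul, map_inv] at h
  have := mul_inv_eq_one.mp h
  simp only [A, X, ← this]

lemma relB : ∀ i : Fin 6, B (i + 2) = B i * B (i + 1) := by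
  intro i
  have h := Φ_rels _ (Or.inl (Or.inr ⟨i, rfl⟩))
  simp only [b, map_mul, map_inv] at h
  have := mul_inv_eq_one.mp h
  simp only [B, X, ← this]

def gensIdx : Fin 4 → Fin 6 ⊕ Fin 6 := ![Sum.inl 0, Sum.inl 1, Sum.inr 0, Sum.inr 1]

def AX (j : Fin 4) : Additive (Abelianization π) := Additive.ofMul (X (gensIdx j))

lemma AX_pow4 : ∀ j : Fin 4, (4:ℤ) • AX j = 0 := by
  intro j
  have h : X (gensIdx j) ^ (4:ℕ) = 1 := by
    fin_cases j
    · exact fibp0 A relA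
    · exact fibp1 A relA
    · exact fibp0 B relB
    · exact fibp1 B relB
  show (4:ℤ) • Additive.ofMul (X (gensIdx j)) = 0
  rw [← ofMul_zpow, show ((4:ℤ)) = ((4:ℕ):ℤ) by norm_num, zpow_natCast, h]
  rfl

def L (j : Fin 4) : ZMod 4 →+ Additive (Abelianization π) :=
  ZMod.lift 4 ⟨zmultiplesHom _ (AX j), by simpa using AX_pow4 j⟩

lemma L_coe (j : Fin 4) (k : ℤ) : L j ((k : ℤ) : ZMod 4) = k • AX j := by
  rw [L, ZMod.lift_coe]; rfl

lemma L_one (j : Fin 4) : L j 1 = AX j := by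
  have := L_coe j 1; simpa using this
lemma L_two (j : Fin 4) : L j 2 = AX j + AX j := by
  have := L_coe j 2; rw [show ((2:ℤ) : ZMod 4) = 2 by norm_num] at this
  rw [this, two_zsmul]
lemma L_three (j : Fin 4) : L j 3 = AX j + AX j + AX j := by
  have h : (3 : ZMod 4) = 2 + 1 := by decide
  rw [h, map_add, L_two, L_one]

def ψ : (Fin 4 → ZMod 4) →+ Additive (Abelianization π) :=
  ∑ j : Fin 4, (L j).comp (Pi.evalAddMonoidHom (fun _ => ZMod 4) j)

lemma ψ_apply (w : Fin 4 → ZMod 4) : ψ w = ∑ j : Fin 4, L j (w j) := by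
  simp [ψ, AddMonoidHom.finset_sum_apply]

def gmap : G4 →* Abelianization π := AddMonoidHom.toMultiplicativeLeft ψ

def Fmap : Abelianization π →* G4 := Abelianization.lift F0

lemma Fmap_X (s : Fin 6 ⊕ Fin 6) : Fmap (X s) = Multiplicative.ofAdd (v s) := by
  show Abelianization.lift F0 (Abelianization.of (PresentedGroup.mk rels (FreeGroup.of s))) = _
  exact (Abelianization.lift_apply_of F0 _).trans (PresentedGroup.toGroup.of hrels)

end

noncomputable section

lemma gmap_ofAdd (w : Fin 4 → ZMod 4) :
    gmap (Multiplicative.ofAdd w) = Additive.toMul (ψ w) := rfl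

lemma gF_gen : ∀ s : Fin 6 ⊕ Fin 6, gmap (Fmap (X s)) = X s := by
  rintro (i | i) <;> fin_cases i <;>
    rw [Fmap_X, gmap_ofAdd, ψ_apply, Fin.sum_univ_four] <;>
    simp only [v, gensIdx, Sum.elim_inl, Sum.elim_inr, Matrix.cons_val_zero, Matrix.cons_val_one,
      Matrix.head_cons, Matrix.cons_val_succ, L_one, L_two, L_three, map_zero, add_zero, zero_add,
      AX, toMul_add, toMul_ofMul]
  · rfl
  · rfl
  · exact (fib2 A relA).symm
  · exact (fib3 A relA).symm
  · exact (fib4 A relA).symm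
  · exact (fib5' A relA).symm
  · rfl
  · rfl
  · exact (fib2 B relB).symm
  · exact (fib3 B relB).symm
  · exact (fib4 B relB).symm
  · exact (fib5' B relB).symm

lemma key (j : Fin 4) (c : ZMod 4) :
    Fmap (Additive.toMul (L j c)) = Multiplicative.ofAdd (Pi.single j c) := by
  obtain ⟨k, rfl⟩ := ZMod.intCast_surjective c
  rw [L_coe, toMul_zsmul, map_zpow, AX, toMul_ofMul, Fmap_X]
  have hv : v (gensIdx j) = Pi.single j 1 := by fin_cases j <;> decide
  rw [hv, ← ofAdd_zsmul]
  congr 1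
  funext m
  simp only [Pi.single_apply, Pi.smul_apply]
  split <;> simp [zsmul_eq_mul]

lemma FG (x : G4) : Fmap (gmap x) = x := by
  have h0 : gmap x = Additive.toMul (ψ (Multiplicative.toAdd x)) := rfl
  rw [h0, ψ_apply, toMul_sum, map_prod]
  calc ∏ j, Fmap (Additive.toMul (L j (Multiplicative.toAdd x j)))
      = ∏ j, Multiplicative.ofAdd (Pi.single j (Multiplicative.toAdd x j)) :=
        Finset.prod_congr rfl (fun j _ => key j _)
    _ = Multiplicative.ofAdd (∑ j, Pi.single j (Multiplicative.toAdd x j)) :=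
        (ofAdd_sum _ _).symm
    _ = x := by rw [Finset.univ_sum_single]; rfl

lemma GF (y : Abelianization π) : gmap (Fmap y) = y := by
  have h : gmap.comp Fmap = MonoidHom.id (Abelianization π) := by
    refine Abelianization.hom_ext _ _ ?_
    refine PresentedGroup.ext fun s => ?_
    show gmap (Fmap (X s)) = X s
    exact gF_gen s
  exact DFunLike.congr_fun h y

/-- The abelianization of `π₁(F)` is isomorphic to `(ℤ/4ℤ)⁴`. -/
theorem abelianization_pi1_fiber :
    Nonempty (Abelianization π ≃* Multiplicative (Fin 4 → ZMod 4)) :=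
  ⟨{ toFun := Fmap, invFun := gmap, left_inv := GF, right_inv := FG,
     map_mul' := map_mul Fmap }⟩

end
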